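/- arXiv:2105.04803 — 3 statements merged into one kernel-verified Lean document; each statement's English description precedes it below -/
import Mathlib

section
/- Define e(g) = Σ_{i=0}^{s} t_i·2^{t_i−1} + Σ_{i=0}^{s} i·2^{t_i}, where g = Σ_{i=0}^{s} 2^{t_i} with t_0 > t_1 > ... > t_s ≥ 0 the binary expansion of g. Then for all positive integers g_0 ≤ g_1, e(g_0 + g_1) ≥ e(g_0) + e(g_1) + g_0. -/
/-- The strictly decreasing list of exponents `t_0 > t_1 > ⋯ > t_s` in the
binary expansion `g = Σ_{i=0}^{s} 2^(t_i)` of `g`. -/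
def expList (g : ℕ) : List ℕ :=
  (((Finset.range (g + 1)).filter (fun k => g.testBit k)).sort (· ≤ ·)).reverse

/-- `e g = Σ_{i=0}^{s} t_i·2^(t_i−1) + Σ_{i=0}^{s} i·2^(t_i)` over the binary
expansion `g = Σ_{i=0}^{s} 2^(t_i)` with `t_0 > t_1 > ⋯ > t_s ≥ 0` (and `e 0 = 0`). -/
def eHL (g : ℕ) : ℕ :=
  ((expList g).zipIdx.map (fun p => p.1 * 2 ^ (p.1 - 1) + p.2 * 2 ^ p.1)).sum

theorem mem_bitIndices (n : ℕ) : ∀ a, a ∈ n.bitIndices ↔ n.testBit a := by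
  induction n using Nat.binaryRec with
  | zero => simp
  | bit b n ih =>
    intro a
    cases b <;> cases a <;>
      simp [Nat.bit_false, Nat.bit_true, Nat.testBit_bit_zero, Nat.testBit_bit_succ, ih,
        Nat.testBit_succ, Nat.mul_add_div, Nat.succ_eq_add_one, Nat.mul_add_mod]

theorem expList_eq (g : ℕ) : expList g = (g.bitIndices).reverse := by
  unfold expList
  congr 1
  refine (fun hp h1 h2 => List.Perm.eq_of_sortedLE h1 h2 hp) ?_ ?_ ?_
  · apply (List.perm_ext_iff_of_nodup (Finset.sort_nodup _ _) Nat.bitIndices_sorted.nodup).2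
    intro a
    simp only [Finset.mem_sort, Finset.mem_filter, Finset.mem_range, mem_bitIndices]
    constructor
    · rintro ⟨-, h⟩; exact h
    · intro h
      refine ⟨?_, h⟩
      have h2 := Nat.two_pow_le_of_mem_bitIndices ((mem_bitIndices g a).2 h)
      exact lt_of_lt_of_le (Nat.lt_two_pow_self (n := a)) (le_trans h2 (Nat.le_succ_of_le le_rfl)) |>.trans_le le_rfl
  · exact (Finset.sortedLT_sort _).sortedLE
  · exact Nat.bitIndices_sorted.sortedLE

def eF : ℕ × ℕ → ℕ := fun p => p.1 * 2 ^ (p.1 - 1) + p.2 * 2 ^ p.1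

theorem eHL_def (g : ℕ) : eHL g = ((expList g).zipIdx.map eF).sum := rfl

theorem enum_shift (l : List ℕ) :
    (((l.map (· + 1)).zipIdx).map eF).sum = 2 * ((l.zipIdx.map eF).sum) + (l.map (2 ^ ·)).sum := by
  rw [List.zipIdx_map, List.map_map]
  have h1 : eF ∘ Prod.map (· + 1) id = fun p => 2 * eF p + 2 ^ p.1 := by
    funext p
    obtain ⟨t, i⟩ := p
    simp only [Function.comp_apply, Prod.map, id, eF]
    cases t with
    | zero => ring_nf
    | succ t =>
      simp only [Nat.add_sub_cancel]
      ring_nf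
  rw [h1]
  rw [List.sum_map_add]
  congr 1
  · rw [← List.sum_map_mul_left]
  · rw [show (fun p : ℕ × ℕ => 2 ^ p.1) = (2 ^ ·) ∘ Prod.fst from rfl, ← List.map_map,
      List.zipIdx_map_fst]

theorem expList_two_mul (m : ℕ) : expList (2 * m) = (expList m).map (· + 1) := by
  rw [expList_eq, expList_eq, Nat.bitIndices_two_mul, List.map_reverse]

theorem expList_two_mul_add_one (m : ℕ) :
    expList (2 * m + 1) = (expList m).map (· + 1) ++ [0] := by
  rw [expList_eq, expList_eq, Nat.bitIndices_two_mul_add_one, List.reverse_cons, List.map_reverse]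

theorem twoPow_sum (m : ℕ) : ((expList m).map (2 ^ ·)).sum = m := by
  rw [expList_eq, List.map_reverse, List.sum_reverse]
  exact Nat.twoPowSum_bitIndices m

theorem eHL_two_mul (m : ℕ) : eHL (2 * m) = 2 * eHL m + m := by
  rw [eHL_def, expList_two_mul, enum_shift, twoPow_sum]
  rfl

theorem eHL_two_mul_add_one (m : ℕ) :
    eHL (2 * m + 1) = 2 * eHL m + m + (expList m).length := by
  rw [eHL_def, expList_two_mul_add_one, List.zipIdx_append, List.map_append, List.sum_append,
    enum_shift, twoPow_sum]
  simp [eF, eHL_def]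

def pc (m : ℕ) : ℕ := (expList m).length

theorem pc_two_mul (m : ℕ) : pc (2 * m) = pc m := by
  rw [pc, pc, expList_two_mul, List.length_map]

theorem pc_two_mul_add_one (m : ℕ) : pc (2 * m + 1) = pc m + 1 := by
  rw [pc, pc, expList_two_mul_add_one, List.length_append, List.length_map]; rfl

theorem pc_pos (m : ℕ) (hm : 1 ≤ m) : 1 ≤ pc m := by
  by_contra h
  have hnil : expList m = [] := List.length_eq_zero_iff.1 (by unfold pc at h; omega)
  have := twoPow_sum m
  rw [hnil] at this
  simp at this
  omega

theorem eHL_succ (n : ℕ) : eHL (n + 1) = eHL n + pc n := by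
  induction n using Nat.strong_induction_on with
  | _ n ih =>
    rcases Nat.even_or_odd n with ⟨m, hm⟩ | ⟨m, hm⟩
    · have hn : n = 2 * m := by omega
      subst hn
      rw [eHL_two_mul_add_one, eHL_two_mul, pc_two_mul]; rfl
    · subst hm
      have h1 : 2 * m + 1 + 1 = 2 * (m + 1) := by ring
      rw [h1, eHL_two_mul, ih m (by omega), eHL_two_mul_add_one, pc_two_mul_add_one]
      unfold pc
      ring

theorem eHL_mono_succ (n : ℕ) : eHL n ≤ eHL (n + 1) := by
  rw [eHL_succ]; omega

theorem eHL_succ_ge (n : ℕ) (hn : 1 ≤ n) : eHL n + 1 ≤ eHL (n + 1) := by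
  rw [eHL_succ]; have := pc_pos n hn; omega

theorem eHL_odd (m : ℕ) : eHL (2 * m + 1) = eHL m + eHL (m + 1) + m := by
  rw [eHL_two_mul_add_one, eHL_succ]; unfold pc; ring

theorem eHL_zero : eHL 0 = 0 := by
  rw [eHL_def, expList_eq, Nat.bitIndices_zero]; rfl

theorem eHL_one : eHL 1 = 0 := by
  rw [eHL_def, expList_eq, Nat.bitIndices_one]; rfl

theorem eHL_super : ∀ N a b, a + b ≤ N → 1 ≤ a → a ≤ b →
    eHL a + eHL b + a ≤ eHL (a + b) := by
  intro N
  induction N with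
  | zero => intro a b h ha hb; omega
  | succ N ih =>
    intro a b hab ha hab2
    rcases Nat.even_or_odd a with ⟨x, hx⟩ | ⟨x, hx⟩ <;>
      rcases Nat.even_or_odd b with ⟨y, hy⟩ | ⟨y, hy⟩
    · -- a = 2x, b = 2y
      have hx' : a = 2 * x := by omega
      have hy' : b = 2 * y := by omega
      subst hx'; subst hy'
      have hsum : 2 * x + 2 * y = 2 * (x + y) := by ring
      rw [hsum, eHL_two_mul, eHL_two_mul, eHL_two_mul]
      have h1 := ih x y (by omega) (by omega) (by omega)
      omega
    · -- a = 2x, b = 2y+1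
      have hx' : a = 2 * x := by omega
      have hy' : b = 2 * y + 1 := by omega
      subst hx'; subst hy'
      have hsum : 2 * x + (2 * y + 1) = 2 * (x + y) + 1 := by ring
      rw [hsum, eHL_odd, eHL_odd, eHL_two_mul]
      have h1 := ih x y (by omega) (by omega) (by omega)
      have h2 := ih x (y + 1) (by omega) (by omega) (by omega)
      have h3 : x + (y + 1) = x + y + 1 := by ring
      rw [h3] at h2
      omega
    · -- a = 2x+1, b = 2y
      have hx' : a = 2 * x + 1 := by omega
      have hy' : b = 2 * y := by omega
      subst hx'; subst hy'
      have hsum : 2 * x + 1 + 2 * y = 2 * (x + y) + 1 := by ring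
      rw [hsum, eHL_odd, eHL_odd, eHL_two_mul]
      rcases Nat.eq_zero_or_pos x with rfl | hxpos
      · have h4 := eHL_succ_ge y (by omega)
        have h5 := eHL_one
        have h6 := eHL_zero
        simp only [Nat.zero_add] at *
        omega
      · have h1 := ih x y (by omega) (by omega) (by omega)
        have h2 := ih (x + 1) y (by omega) (by omega) (by omega)
        have h3 : x + 1 + y = x + y + 1 := by ring
        rw [h3] at h2
        omega
    · -- a = 2x+1, b = 2y+1
      have hx' : a = 2 * x + 1 := by omega
      have hy' : b = 2 * y + 1 := by omega
      subst hx'; subst hy'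
      have hsum : 2 * x + 1 + (2 * y + 1) = 2 * (x + y + 1) := by ring
      rw [hsum, eHL_two_mul, eHL_odd, eHL_odd]
      rcases Nat.eq_zero_or_pos x with rfl | hxpos
      · have h4 := eHL_mono_succ y
        have h5 := eHL_one
        have h6 := eHL_zero
        simp only [Nat.zero_add] at *
        omega
      · have h1 := ih x (y + 1) (by omega) (by omega) (by omega)
        have h1' : x + (y + 1) = x + y + 1 := by ring
        rw [h1'] at h1
        have h2 : eHL (x + 1) + eHL y + x ≤ eHL (x + y + 1) := by
          rcases Nat.lt_or_ge x y with hlt | hge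
          · have h2' := ih (x + 1) y (by omega) (by omega) (by omega)
            have : x + 1 + y = x + y + 1 := by ring
            rw [this] at h2'
            omega
          · have hxy : x = y := by omega
            subst hxy
            have h2' := ih x (x + 1) (by omega) (by omega) (by omega)
            have : x + (x + 1) = x + x + 1 := by ring
            rw [this] at h2'
            omega
        omega

theorem eHL_superadditive (g₀ g₁ : ℕ) (h₀ : 1 ≤ g₀) (h : g₀ ≤ g₁) :
    eHL g₀ + eHL g₁ + g₀ ≤ eHL (g₀ + g₁) := by
  exact eHL_super (g₀ + g₁) g₀ g₁ le_rfl h₀ h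
end

section
/- Let e(g) be defined by e(g) = Σ_{i=0}^{s} t_i·2^{t_i−1} + Σ_{i=0}^{s} i·2^{t_i} for g = Σ_{i=0}^{s} 2^{t_i} (binary expansion, t_0 > ... > t_s ≥ 0), and e(0)=0. If 1 ≤ i ≤ j, then e(i+1) + e(j) ≤ e(i+j). -/
/-- binary digit sum -/
def nu (n : ℕ) : ℕ := (Nat.digits 2 n).sum

lemma nu_zero : nu 0 = 0 := by simp [nu]

lemma nu_two_mul (n : ℕ) : nu (2 * n) = nu n := by
  rcases Nat.eq_zero_or_pos n with h | h
  · simp [h, nu]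
  · unfold nu
    rw [Nat.digits_def' (by norm_num) (by omega)]
    simp [Nat.mul_div_cancel_left _ (by norm_num : 0 < 2), Nat.mul_mod_right]

lemma nu_two_mul_add_one (n : ℕ) : nu (2 * n + 1) = nu n + 1 := by
  unfold nu
  rw [Nat.digits_def' (by norm_num) (by omega)]
  have : (2 * n + 1) / 2 = n := by omega
  rw [this]
  simp [Nat.mul_add_mod, Nat.add_comm]

lemma nu_pos {n : ℕ} (h : 1 ≤ n) : 1 ≤ nu n := by
  induction n using Nat.strong_induction_on with
  | _ n ih =>
    rcases Nat.even_or_odd n with ⟨a, ha⟩ | ⟨a, ha⟩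
    · subst ha
      rw [(by ring : a + a = 2 * a), nu_two_mul]
      exact ih a (by omega) (by omega)
    · subst ha
      rw [nu_two_mul_add_one]; omega

lemma nu_succ_le (n : ℕ) : nu (n + 1) ≤ nu n + 1 := by
  induction n using Nat.strong_induction_on with
  | _ n ih =>
    rcases Nat.even_or_odd n with ⟨a, ha⟩ | ⟨a, ha⟩
    · subst ha
      rw [(by ring : a + a = 2 * a), nu_two_mul, nu_two_mul_add_one]
    · subst ha
      rw [(by ring : 2 * a + 1 + 1 = 2 * (a + 1)), nu_two_mul, nu_two_mul_add_one]
      have := ih a (by omega)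
      omega

lemma nu_add_le (a b : ℕ) : nu (a + b) ≤ nu a + nu b := by
  have key : ∀ n a b : ℕ, a + b = n → nu (a + b) ≤ nu a + nu b := by
    intro n
    induction n using Nat.strong_induction_on with
    | _ n ih =>
    intro a b h
    subst h
    rcases Nat.even_or_odd a with ⟨x, hx⟩ | ⟨x, hx⟩ <;>
      rcases Nat.even_or_odd b with ⟨y, hy⟩ | ⟨y, hy⟩ <;> subst hx hy
    · rw [(by ring : x + x + (y + y) = 2 * (x + y)), (by ring : x + x = 2 * x),
        (by ring : y + y = 2 * y), nu_two_mul, nu_two_mul, nu_two_mul]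
      rcases Nat.eq_zero_or_pos (x + y) with h | h
      · obtain ⟨rfl, rfl⟩ : x = 0 ∧ y = 0 := by omega
        simp [nu_zero]
      · exact ih (x + y) (by omega) x y rfl
    · rw [(by ring : x + x + (2 * y + 1) = 2 * (x + y) + 1), (by ring : x + x = 2 * x),
        nu_two_mul_add_one, nu_two_mul, nu_two_mul_add_one]
      rcases Nat.eq_zero_or_pos (x + y) with h | h
      · obtain ⟨rfl, rfl⟩ : x = 0 ∧ y = 0 := by omega
        simp [nu_zero]
      · have := ih (x + y) (by omega) x y rfl
        omega
    · rw [(by ring : 2 * x + 1 + (y + y) = 2 * (x + y) + 1), (by ring : y + y = 2 * y),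
        nu_two_mul_add_one, nu_two_mul, nu_two_mul_add_one]
      rcases Nat.eq_zero_or_pos (x + y) with h | h
      · obtain ⟨rfl, rfl⟩ : x = 0 ∧ y = 0 := by omega
        simp [nu_zero]
      · have := ih (x + y) (by omega) x y rfl
        omega
    · rw [(by ring : 2 * x + 1 + (2 * y + 1) = 2 * (x + y + 1)), nu_two_mul,
        nu_two_mul_add_one, nu_two_mul_add_one]
      have h1 := nu_succ_le (x + y)
      have h2 := ih (x + y) (by omega) x y rfl
      omega
  exact key (a + b) a b rfl

/-- sum of binary digit sums below n -/
def fcnt (n : ℕ) : ℕ := ∑ m ∈ Finset.range n, nu m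

lemma fcnt_succ (n : ℕ) : fcnt (n + 1) = fcnt n + nu n := Finset.sum_range_succ _ _

lemma fcnt_two_mul (n : ℕ) : fcnt (2 * n) = 2 * fcnt n + n := by
  induction n with
  | zero => simp [fcnt]
  | succ n ih =>
    rw [(by ring : 2 * (n + 1) = 2 * n + 1 + 1), fcnt_succ, fcnt_succ, ih, fcnt_succ,
      nu_two_mul, nu_two_mul_add_one]
    ring

lemma fcnt_two_mul_add_one (n : ℕ) : fcnt (2 * n + 1) = 2 * fcnt n + n + nu n := by
  rw [fcnt_succ, fcnt_two_mul, nu_two_mul]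

lemma fcnt_one : fcnt 1 = 0 := by simp [fcnt, nu_zero]

lemma fcnt_main : ∀ n i j : ℕ, i + j = n → 1 ≤ i → 1 ≤ j → i ≤ j + 1 →
    fcnt (i + 1) + fcnt j ≤ fcnt (i + j) := by
  intro n
  induction n using Nat.strong_induction_on with
  | _ n ih =>
  intro i j h hi hj hij
  subst h
  rcases Nat.even_or_odd i with ⟨a, ha⟩ | ⟨a, ha⟩ <;>
    rcases Nat.even_or_odd j with ⟨b, hb⟩ | ⟨b, hb⟩
  · -- i = 2a, j = 2b
    obtain rfl : i = 2 * a := by omega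
    obtain rfl : j = 2 * b := by omega
    have ha1 : 1 ≤ a := by omega
    have hb1 : 1 ≤ b := by omega
    have IH := ih (a + b) (by omega) a b rfl ha1 hb1 (by omega)
    have e1 : 2 * a + 2 * b = 2 * (a + b) := by ring
    have e2 : 2 * a + 1 = 2 * a + 1 := rfl
    rw [e1, fcnt_two_mul, (by ring : 2 * a + 1 = 2 * a + 1), fcnt_two_mul_add_one,
      fcnt_two_mul]
    have hfa := fcnt_succ a
    omega
  · -- i = 2a, j = 2b+1
    obtain rfl : i = 2 * a := by omega
    obtain rfl : j = 2 * b + 1 := by omega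
    have ha1 : 1 ≤ a := by omega
    have IH := ih (a + (b + 1)) (by omega) a (b + 1) rfl ha1 (by omega) (by omega)
    have e1 : 2 * a + (2 * b + 1) = 2 * (a + b) + 1 := by ring
    rw [e1, fcnt_two_mul_add_one, fcnt_two_mul_add_one, fcnt_two_mul_add_one]
    have hfa := fcnt_succ a
    have hfb := fcnt_succ b
    have hfab := fcnt_succ (a + b)
    have hsub := nu_add_le a b
    have e2 : a + (b + 1) = a + b + 1 := by ring
    rw [e2] at IH
    omega
  · -- i = 2a+1, j = 2b
    obtain rfl : i = 2 * a + 1 := by omega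
    obtain rfl : j = 2 * b := by omega
    have hb1 : 1 ≤ b := by omega
    have e1 : 2 * a + 1 + 2 * b = 2 * (a + b) + 1 := by ring
    have e2 : 2 * a + 1 + 1 = 2 * (a + 1) := by ring
    rw [e1, e2, fcnt_two_mul_add_one, fcnt_two_mul, fcnt_two_mul]
    have hnab : 1 ≤ nu (a + b) := nu_pos (by omega)
    rcases Nat.eq_zero_or_pos a with rfl | ha1
    · simp only [Nat.zero_add, Nat.mul_zero, Nat.zero_mul] at *
      have hf1 : fcnt 1 = 0 := fcnt_one
      have hf0 : fcnt 0 = 0 := by simp [fcnt]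
      omega
    · have IH := ih (a + b) (by omega) a b rfl ha1 hb1 (by omega)
      have hfa := fcnt_succ a
      omega
  · -- i = 2a+1, j = 2b+1
    obtain rfl : i = 2 * a + 1 := by omega
    obtain rfl : j = 2 * b + 1 := by omega
    have e1 : 2 * a + 1 + (2 * b + 1) = 2 * (a + b + 1) := by ring
    have e2 : 2 * a + 1 + 1 = 2 * (a + 1) := by ring
    rw [e1, e2, fcnt_two_mul, fcnt_two_mul, fcnt_two_mul_add_one]
    have hfb := fcnt_succ b
    rcases Nat.eq_zero_or_pos a with rfl | ha1
    · have hfb1 := fcnt_succ (b + 1)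
      simp only [Nat.zero_add, Nat.mul_zero, Nat.zero_mul] at *
      have hf1 : fcnt 1 = 0 := fcnt_one
      omega
    · have IH := ih (a + (b + 1)) (by omega) a (b + 1) rfl ha1 (by omega) (by omega)
      have hfa := fcnt_succ a
      have hfab := fcnt_succ (a + b)
      have e3 : a + (b + 1) = a + b + 1 := by ring
      rw [e3] at IH
      omega
-- testBit facts
lemma tb_lt {t r k : ℕ} (hk : k < t) : (2 ^ t + r).testBit k = r.testBit k := by
  rw [Nat.testBit_eq_decide_div_mod_eq, Nat.testBit_eq_decide_div_mod_eq]
  have h1 : 2 ^ t + r = 2 ^ k * (2 * 2 ^ (t - k - 1)) + r := by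
    rw [← pow_succ']
    rw [← pow_add]
    congr 2
    omega
  rw [h1, Nat.mul_add_div (Nat.two_pow_pos k)]
  have h2 : (2 * 2 ^ (t - k - 1) + r / 2 ^ k) % 2 = r / 2 ^ k % 2 := by omega
  rw [h2]

lemma tb_eq {t r : ℕ} (hr : r < 2 ^ t) : (2 ^ t + r).testBit t = true := by
  rw [Nat.testBit_eq_decide_div_mod_eq]
  have : (2 ^ t + r) / 2 ^ t = 1 := by
    rw [Nat.add_comm, Nat.add_div_right _ (Nat.two_pow_pos t), Nat.div_eq_of_lt hr]
  rw [this]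
  rfl

lemma tb_gt {t r k : ℕ} (hr : r < 2 ^ t) (hk : t < k) : (2 ^ t + r).testBit k = false := by
  apply Nat.testBit_eq_false_of_lt
  calc 2 ^ t + r < 2 ^ t + 2 ^ t := by omega
  _ = 2 ^ (t + 1) := by ring
  _ ≤ 2 ^ k := Nat.pow_le_pow_right (by norm_num) (by omega)

lemma testBit_le {n k : ℕ} (h : n.testBit k = true) : 2 ^ k ≤ n := by
  by_contra hc
  rw [Nat.testBit_eq_false_of_lt (by omega)] at h
  simp at h

lemma filter_eq_bits (g : ℕ) :
    ((Finset.range (g + 1)).filter (fun k => g.testBit k)) =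
      ((Finset.range (g + 1)).filter (fun k => g.testBit k)) := rfl

lemma filter_insert {t r : ℕ} (hr : r < 2 ^ t) :
    ((Finset.range (2 ^ t + r + 1)).filter (fun k => (2 ^ t + r).testBit k)) =
      insert t ((Finset.range (r + 1)).filter (fun k => r.testBit k)) := by
  ext k
  simp only [Finset.mem_filter, Finset.mem_range, Finset.mem_insert]
  constructor
  · rintro ⟨hk, hb⟩
    rcases lt_trichotomy k t with h | h | h
    · right
      rw [tb_lt h] at hb
      have h2 : 2 ^ k ≤ r := testBit_le hb
      have h3 : k < 2 ^ k := Nat.lt_two_pow_self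
      exact ⟨by omega, hb⟩
    · exact Or.inl h
    · rw [tb_gt hr h] at hb; simp at hb
  · rintro (rfl | ⟨hk, hb⟩)
    · have h3 : k < 2 ^ k := Nat.lt_two_pow_self
      exact ⟨by omega, tb_eq hr⟩
    · have h2 : 2 ^ k ≤ r := testBit_le hb
      have hkt : k < t := by
        by_contra hc
        have : 2 ^ t ≤ 2 ^ k := Nat.pow_le_pow_right (by norm_num) (by omega)
        omega
      exact ⟨by omega, by rw [tb_lt hkt]; exact hb⟩

lemma sort_insert_max {t : ℕ} {s : Finset ℕ} (h : ∀ x ∈ s, x < t) :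
    (insert t s).sort (· ≤ ·) = s.sort (· ≤ ·) ++ [t] := by
  have ht : t ∉ s := fun hm => lt_irrefl t (h t hm)
  have hperm : ((insert t s).sort (· ≤ ·)).Perm (s.sort (· ≤ ·) ++ [t]) := by
    have p1 : ((insert t s).sort (· ≤ ·)).Perm ((insert t s).toList) := Finset.sort_perm_toList _ _
    have p2 : ((insert t s).toList).Perm (t :: s.toList) := Finset.toList_insert ht
    have p3 : (t :: s.toList).Perm (t :: s.sort (· ≤ ·)) :=
      List.Perm.cons t (Finset.sort_perm_toList _ _).symm
    have p4 : (s.sort (· ≤ ·) ++ [t]).Perm (t :: s.sort (· ≤ ·)) := List.perm_append_singleton t _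
    exact ((p1.trans p2).trans p3).trans p4.symm
  have hs2 : List.Pairwise (· ≤ ·) (s.sort (· ≤ ·) ++ [t]) := by
    rw [List.pairwise_append]
    refine ⟨Finset.pairwise_sort _ _, List.pairwise_singleton _ _, ?_⟩
    intro x hx y hy
    rw [List.mem_singleton] at hy
    subst hy
    exact le_of_lt (h x ((Finset.mem_sort _).mp hx))
  exact hperm.eq_of_pairwise' (Finset.pairwise_sort _ _) hs2

lemma expList_zero : expList 0 = [] := by
  simp [expList, Nat.zero_testBit]

lemma expList_cons {t r : ℕ} (hr : r < 2 ^ t) :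
    expList (2 ^ t + r) = t :: expList r := by
  unfold expList
  rw [filter_insert hr, sort_insert_max, List.reverse_append]
  · simp
  · intro x hx
    simp only [Finset.mem_filter, Finset.mem_range] at hx
    have h2 : 2 ^ x ≤ r := testBit_le hx.2
    by_contra hc
    have : 2 ^ t ≤ 2 ^ x := Nat.pow_le_pow_right (by norm_num) (by omega)
    omega

-- enum shift lemma
lemma enumFrom_sum (L : List ℕ) : ∀ n : ℕ,
    ((L.zipIdx (n + 1)).map (fun p => p.1 * 2 ^ (p.1 - 1) + p.2 * 2 ^ p.1)).sum =
      ((L.zipIdx n).map (fun p => p.1 * 2 ^ (p.1 - 1) + p.2 * 2 ^ p.1)).sum +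
        (L.map (fun u => 2 ^ u)).sum := by
  induction L with
  | nil => intro n; simp
  | cons a L ih =>
    intro n
    simp only [List.zipIdx_cons, List.map_cons, List.sum_cons, ih (n + 1)]
    ring

lemma eHL_cons {t r : ℕ} (hr : r < 2 ^ t) :
    eHL (2 ^ t + r) = t * 2 ^ (t - 1) + eHL r + ((expList r).map (fun u => 2 ^ u)).sum := by
  unfold eHL
  rw [expList_cons hr]
  show (((t, 0) :: (expList r).zipIdx 1).map _).sum = _
  simp only [List.map_cons, List.sum_cons]
  rw [show (1 : ℕ) = 0 + 1 from rfl, enumFrom_sum]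
  show t * 2 ^ (t - 1) + 0 * 2 ^ t + _ = _
  ring

lemma expList_pow_sum : ∀ g : ℕ, ((expList g).map (fun u => 2 ^ u)).sum = g := by
  intro g
  induction g using Nat.strong_induction_on with
  | _ g ih =>
  rcases Nat.eq_zero_or_pos g with rfl | hg
  · simp [expList_zero]
  · set t := Nat.log 2 g with ht
    have h1 : 2 ^ t ≤ g := Nat.pow_log_le_self 2 (by omega)
    have h2 : g < 2 ^ (t + 1) := Nat.lt_pow_succ_log_self (by norm_num) g
    have h3 : 2 ^ (t + 1) = 2 * 2 ^ t := by ring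
    have hpos : 1 ≤ 2 ^ t := Nat.one_le_two_pow
    set r := g - 2 ^ t with hrdef
    have hr : r < 2 ^ t := by omega
    have hg' : g = 2 ^ t + r := by omega
    rw [hg', expList_cons hr]
    simp only [List.map_cons, List.sum_cons]
    rw [ih r (by omega)]

lemma eHL_rec {t r : ℕ} (hr : r < 2 ^ t) :
    eHL (2 ^ t + r) = t * 2 ^ (t - 1) + r + eHL r := by
  rw [eHL_cons hr, expList_pow_sum]
  ring

lemma nu_two_pow_add : ∀ t r : ℕ, r < 2 ^ t → nu (2 ^ t + r) = nu r + 1 := by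
  intro t
  induction t with
  | zero =>
    intro r hr
    interval_cases r
    show nu 1 = nu 0 + 1
    rw [show (1 : ℕ) = 2 * 0 + 1 from rfl, nu_two_mul_add_one]
  | succ t ih =>
    intro r hr
    rcases Nat.even_or_odd r with ⟨q, hq⟩ | ⟨q, hq⟩
    · obtain rfl : r = 2 * q := by omega
      have h1 : 2 ^ (t + 1) + 2 * q = 2 * (2 ^ t + q) := by ring
      rw [h1, nu_two_mul, nu_two_mul, ih q (by omega)]
    · obtain rfl : r = 2 * q + 1 := by omega
      have h1 : 2 ^ (t + 1) + (2 * q + 1) = 2 * (2 ^ t + q) + 1 := by ring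
      rw [h1, nu_two_mul_add_one, nu_two_mul_add_one, ih q (by omega)]

lemma fcnt_two_pow : ∀ t : ℕ, fcnt (2 ^ t) = t * 2 ^ (t - 1) := by
  intro t
  induction t with
  | zero => simpa using fcnt_one
  | succ t ih =>
    have h1 : 2 ^ (t + 1) = 2 * 2 ^ t := by ring
    rw [h1, fcnt_two_mul, ih]
    rcases Nat.eq_zero_or_pos t with rfl | ht
    · norm_num
    · have h2 : 2 ^ t = 2 * 2 ^ (t - 1) := by
        rw [← pow_succ']
        congr 1
        omega
      have h3 : t + 1 - 1 = t := by omega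
      rw [h3, h2]
      ring

lemma fcnt_rec {t : ℕ} : ∀ r : ℕ, r < 2 ^ t → fcnt (2 ^ t + r) = t * 2 ^ (t - 1) + r + fcnt r := by
  intro r
  induction r with
  | zero =>
    intro _
    simp [fcnt_two_pow t, show fcnt 0 = 0 from by simp [fcnt]]
  | succ r ih =>
    intro hr
    have h1 : 2 ^ t + (r + 1) = (2 ^ t + r) + 1 := by ring
    rw [h1, fcnt_succ, ih (by omega), nu_two_pow_add t r (by omega), fcnt_succ]
    ring

lemma eHL_eq_fcnt : ∀ g : ℕ, eHL g = fcnt g := by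
  intro g
  induction g using Nat.strong_induction_on with
  | _ g ih =>
  rcases Nat.eq_zero_or_pos g with rfl | hg
  · show eHL 0 = fcnt 0
    simp [eHL, expList_zero, fcnt]
  · set t := Nat.log 2 g with ht
    have h1 : 2 ^ t ≤ g := Nat.pow_log_le_self 2 (by omega)
    have h2 : g < 2 ^ (t + 1) := Nat.lt_pow_succ_log_self (by norm_num) g
    have h3 : 2 ^ (t + 1) = 2 * 2 ^ t := by ring
    have hpos : 1 ≤ 2 ^ t := Nat.one_le_two_pow
    set r := g - 2 ^ t with hrdef
    have hr : r < 2 ^ t := by omega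
    have hg' : g = 2 ^ t + r := by omega
    rw [hg', eHL_rec hr, fcnt_rec r hr, ih r (by omega)]

theorem eHL_add_le (i j : ℕ) (h₁ : 1 ≤ i) (h₂ : i ≤ j) :
    eHL (i + 1) + eHL j ≤ eHL (i + j) := by
  rw [eHL_eq_fcnt, eHL_eq_fcnt, eHL_eq_fcnt]
  exact fcnt_main (i + j) i j rfl h₁ (by omega) (by omega)
end

section
/- For positive integers m_1, ..., m_g with m = m_1 + ... + m_g, the function e satisfies Σ_{i=1}^{g} e(m_i) ≤ e(m − g + 1), where e(g) = Σ t_i·2^{t_i−1} + Σ i·2^{t_i} via the binary expansion of g and e(0) = 0. -/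
namespace EHLaux

/-! ### digit sum -/

def nu (n : ℕ) : ℕ := (Nat.digits 2 n).sum

@[simp] lemma nu_zero : nu 0 = 0 := by simp [nu]

lemma nu_two_mul (n : ℕ) : nu (2 * n) = nu n := by
  rcases Nat.eq_zero_or_pos n with h | h
  · simp [h, nu]
  · unfold nu
    rw [Nat.digits_def' (by norm_num : (1:ℕ) < 2) (by omega)]
    simp [Nat.mul_div_cancel_left _ (by norm_num : (0:ℕ) < 2), Nat.mul_mod_right]

lemma nu_two_mul_add_one (n : ℕ) : nu (2 * n + 1) = nu n + 1 := by
  unfold nu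
  rw [Nat.digits_def' (by norm_num : (1:ℕ) < 2) (by omega)]
  have h1 : (2 * n + 1) % 2 = 1 := by omega
  have h2 : (2 * n + 1) / 2 = n := by omega
  rw [h1, h2]
  simp [Nat.add_comm]

lemma nu_le (n : ℕ) : nu n ≤ n := by
  induction n using Nat.strong_induction_on with
  | _ n ih =>
    rcases n.even_or_odd with ⟨k, hk⟩ | ⟨k, hk⟩
    · rcases Nat.eq_zero_or_pos k with h | h
      · simp [hk, h, nu_zero]
      · have e : nu n = nu k := by
          rw [show n = 2 * k by omega, nu_two_mul]
        have := ih k (by omega)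
        omega
    · have e : nu n = nu k + 1 := by
        rw [hk, nu_two_mul_add_one]
      have := ih k (by omega)
      omega

lemma nu_pow_add : ∀ t i, i < 2 ^ t → nu (2 ^ t + i) = nu i + 1 := by
  intro t
  induction t with
  | zero =>
    intro i hi
    interval_cases i
    simp [nu]
  | succ t ih =>
    intro i hi
    rcases i.even_or_odd with ⟨j, hj⟩ | ⟨j, hj⟩
    · have hj' : j < 2 ^ t := by rw [pow_succ] at hi; omega
      have : 2 ^ (t + 1) + i = 2 * (2 ^ t + j) := by rw [pow_succ]; omega
      rw [this, nu_two_mul, ih j hj', hj]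
      have : j + j = 2 * j := by omega
      rw [this, nu_two_mul]
    · have hj' : j < 2 ^ t := by rw [pow_succ] at hi; omega
      have : 2 ^ (t + 1) + i = 2 * (2 ^ t + j) + 1 := by rw [pow_succ]; omega
      rw [this, nu_two_mul_add_one, ih j hj', hj, nu_two_mul_add_one]

/-! ### partial sums of digit sums -/

def F (n : ℕ) : ℕ := ∑ i ∈ Finset.range n, nu i

@[simp] lemma F_zero : F 0 = 0 := rfl

lemma F_succ (n : ℕ) : F (n + 1) = F n + nu n := Finset.sum_range_succ _ _

lemma F_two_mul (n : ℕ) : F (2 * n) = 2 * F n + n := by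
  induction n with
  | zero => simp
  | succ n ih =>
    have h : 2 * (n + 1) = 2 * n + 1 + 1 := by ring
    rw [h, F_succ, F_succ, ih, F_succ, nu_two_mul, nu_two_mul_add_one]
    ring

lemma F_two_mul_add_one (n : ℕ) : F (2 * n + 1) = F n + F (n + 1) + n := by
  rw [F_succ, F_two_mul, nu_two_mul, F_succ]
  ring

lemma F_pow (t : ℕ) : F (2 ^ t) = t * 2 ^ (t - 1) := by
  induction t with
  | zero => simpa using F_succ 0
  | succ t ih =>
    have he : (2:ℕ) ^ (t + 1) = 2 * 2 ^ t := by ring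
    rw [he, F_two_mul, ih]
    rcases Nat.eq_zero_or_pos t with h | h
    · simp [h]
    · have ht : t - 1 + 1 = t := by omega
      have h2 : 2 * (t * 2 ^ (t - 1)) = t * 2 ^ t := by
        calc 2 * (t * 2 ^ (t - 1)) = t * (2 ^ (t - 1) * 2) := by ring
          _ = t * 2 ^ (t - 1 + 1) := by rw [pow_succ]
          _ = t * 2 ^ t := by rw [ht]
      rw [h2]
      simp only [Nat.add_sub_cancel]
      ring

lemma F_pow_add (t : ℕ) : ∀ r, r ≤ 2 ^ t → F (2 ^ t + r) = t * 2 ^ (t - 1) + r + F r := by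
  intro r
  induction r with
  | zero => intro _; simp [F_pow]
  | succ r ih =>
    intro hr
    have h1 : 2 ^ t + (r + 1) = (2 ^ t + r) + 1 := by ring
    rw [h1, F_succ, ih (by omega), nu_pow_add t r (by omega), F_succ]
    ring

/-! ### superadditivity -/

lemma F_super_aux : ∀ n a b, a + b ≤ n → F a + F b + min a b ≤ F (a + b) := by
  intro n
  induction n using Nat.strong_induction_on with
  | _ n ih =>
    intro a b hab
    rcases Nat.eq_zero_or_pos a with ha | ha
    · simp [ha]
    rcases Nat.eq_zero_or_pos b with hb | hb
    · simp [hb]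
    rcases Nat.eq_zero_or_pos n with hn | hn
    · omega
    rcases a.even_or_odd with ⟨a', ha'⟩ | ⟨a', ha'⟩ <;>
      rcases b.even_or_odd with ⟨b', hb'⟩ | ⟨b', hb'⟩
    · -- even, even
      have ea : a = 2 * a' := by omega
      have eb : b = 2 * b' := by omega
      have hih := ih (n - 1) (by omega) a' b' (by omega)
      have h1 : a + b = 2 * (a' + b') := by omega
      rw [h1, ea, eb, F_two_mul, F_two_mul, F_two_mul]
      omega
    · -- even, odd
      have ea : a = 2 * a' := by omega
      have eb : b = 2 * b' + 1 := by omega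
      have hih1 := ih (n - 1) (by omega) a' b' (by omega)
      have hih2 := ih (n - 1) (by omega) a' (b' + 1) (by omega)
      have h1 : a + b = 2 * (a' + b') + 1 := by omega
      rw [show a' + (b' + 1) = a' + b' + 1 by omega] at hih2
      rw [h1, ea, eb, F_two_mul, F_two_mul_add_one, F_two_mul_add_one]
      omega
    · -- odd, even
      have ea : a = 2 * a' + 1 := by omega
      have eb : b = 2 * b' := by omega
      have hih1 := ih (n - 1) (by omega) a' b' (by omega)
      have hih2 := ih (n - 1) (by omega) (a' + 1) b' (by omega)
      have h1 : a + b = 2 * (a' + b') + 1 := by omega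
      rw [show a' + 1 + b' = a' + b' + 1 by omega] at hih2
      rw [h1, ea, eb, F_two_mul, F_two_mul_add_one, F_two_mul_add_one]
      omega
    · -- odd, odd
      have ea : a = 2 * a' + 1 := by omega
      have eb : b = 2 * b' + 1 := by omega
      have hih1 := ih (n - 1) (by omega) a' (b' + 1) (by omega)
      have hih2 := ih (n - 1) (by omega) (a' + 1) b' (by omega)
      have h1 : a + b = 2 * (a' + b' + 1) := by omega
      rw [show a' + (b' + 1) = a' + b' + 1 by omega] at hih1
      rw [show a' + 1 + b' = a' + b' + 1 by omega] at hih2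
      rw [h1, ea, eb, F_two_mul_add_one, F_two_mul_add_one, F_two_mul]
      omega

lemma F_super (a b : ℕ) : F a + F b + min a b ≤ F (a + b) :=
  F_super_aux (a + b) a b le_rfl

lemma F_step {x y : ℕ} (hx : 1 ≤ x) (hy : 1 ≤ y) : F x + F y ≤ F (x + y - 1) := by
  rcases le_total x y with h | h
  · have h1 := F_super (x - 1) y
    have h2 : x - 1 + y = x + y - 1 := by omega
    rw [h2] at h1
    have h3 : F x = F (x - 1) + nu (x - 1) := by
      have h := F_succ (x - 1)
      rw [show x - 1 + 1 = x by omega] at h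
      exact h
    have h4 := nu_le (x - 1)
    omega
  · have h1 := F_super x (y - 1)
    have h2 : x + (y - 1) = x + y - 1 := by omega
    rw [h2] at h1
    have h3 : F y = F (y - 1) + nu (y - 1) := by
      have h := F_succ (y - 1)
      rw [show y - 1 + 1 = y by omega] at h
      exact h
    have h4 := nu_le (y - 1)
    omega

/-! ### expList structure -/

lemma testBit_le {g k : ℕ} (h : g.testBit k = true) : 2 ^ k ≤ g := by
  by_contra hc
  push_neg at hc
  rw [Nat.testBit_eq_false_of_lt hc] at h
  exact Bool.false_ne_true h

lemma mem_filter_iff (g k : ℕ) :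
    k ∈ (Finset.range (g + 1)).filter (fun k => g.testBit k) ↔ g.testBit k = true := by
  simp only [Finset.mem_filter, Finset.mem_range]
  constructor
  · rintro ⟨_, h⟩; exact h
  · intro h
    refine ⟨?_, h⟩
    have h1 := testBit_le h
    have h2 := Nat.lt_two_pow_self (n := k)
    omega

lemma filter_decomp {t r : ℕ} (hr : r < 2 ^ t) :
    (Finset.range (2 ^ t + r + 1)).filter (fun k => (2 ^ t + r).testBit k)
      = insert t ((Finset.range (r + 1)).filter (fun k => r.testBit k)) := by
  ext k
  rw [mem_filter_iff, Finset.mem_insert, mem_filter_iff]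
  rcases lt_trichotomy k t with hk | hk | hk
  · -- low bits agree
    have hne : ¬ (k = t) := by omega
    have key : (2 ^ t + r).testBit k = r.testBit k := by
      rw [Nat.testBit_eq_decide_div_mod_eq, Nat.testBit_eq_decide_div_mod_eq]
      have h1 : (2:ℕ) ^ t = 2 ^ k * (2 * 2 ^ (t - k - 1)) := by
        rw [← pow_succ']
        rw [← pow_add]
        congr 1
        omega
      have h2 : (2 ^ t + r) / 2 ^ k = 2 * 2 ^ (t - k - 1) + r / 2 ^ k := by
        rw [h1, Nat.add_comm, Nat.add_mul_div_left _ _ (Nat.pow_pos (n := k) (by norm_num : 0 < 2)), Nat.add_comm]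
      rw [h2, Nat.mul_add_mod]
    rw [key]
    tauto
  · subst hk
    have : (2 ^ k + r).testBit k = true := by
      rw [Nat.testBit_eq_decide_div_mod_eq]
      have : (2 ^ k + r) / 2 ^ k = 1 := by
        rw [Nat.add_comm, Nat.add_div_right _ (Nat.pow_pos (n := k) (by norm_num : 0 < 2))]
        rw [Nat.div_eq_of_lt hr]
      simp [this]
    rw [this]
    have : ¬ r.testBit k = true := by
      rw [Nat.testBit_eq_false_of_lt hr]; simp
    tauto
  · have h2k : 2 ^ t + r < 2 ^ k := by
      have : 2 ^ (t + 1) ≤ 2 ^ k := Nat.pow_le_pow_right (by norm_num) (by omega)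
      rw [pow_succ] at this
      omega
    have hg : (2 ^ t + r).testBit k = false := Nat.testBit_eq_false_of_lt h2k
    have hrk : r.testBit k = false := Nat.testBit_eq_false_of_lt (by omega)
    rw [hg, hrk]
    simp
    omega

lemma expList_decomp {t r : ℕ} (hr : r < 2 ^ t) :
    expList (2 ^ t + r) = t :: expList r := by
  unfold expList
  rw [filter_decomp hr]
  set s := (Finset.range (r + 1)).filter (fun k => r.testBit k) with hs
  have hts : t ∉ s := by
    rw [hs, mem_filter_iff]
    rw [Nat.testBit_eq_false_of_lt hr]
    simp
  have hlt : ∀ b ∈ s, b < t := by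
    intro b hb
    rw [hs, mem_filter_iff] at hb
    have h1 := testBit_le hb
    have : (2:ℕ) ^ b < 2 ^ t := by omega
    exact (Nat.pow_lt_pow_iff_right (by norm_num)).mp this
  have key : Finset.sort (insert t s) (· ≤ ·) = Finset.sort s (· ≤ ·) ++ [t] := by
    refine (fun h1 h2 => List.Perm.eq_of_pairwise' (Finset.pairwise_sort _ _) h2 h1) ?_ ?_
    · exact (Finset.sort_perm_toList _ _).trans
        ((Finset.toList_insert hts).trans
          (((Finset.sort_perm_toList s (· ≤ ·)).symm.cons t).trans
            (List.perm_append_singleton _ _).symm))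
    · rw [List.pairwise_append]
      refine ⟨Finset.pairwise_sort _ _, List.pairwise_singleton _ _, ?_⟩
      intro a ha b hb
      rw [List.mem_singleton] at hb
      subst hb
      have := hlt a ((Finset.mem_sort (s := s) (r := (· ≤ ·))).mp ha)
      omega
  rw [key, List.reverse_append]
  simp

lemma expList_zero : expList 0 = [] := by
  simp [expList, Nat.zero_testBit]

/-! ### eHL recursion -/

def f (p : ℕ × ℕ) : ℕ := p.1 * 2 ^ (p.1 - 1) + p.2 * 2 ^ p.1

lemma enumFrom_sum (l : List ℕ) : ∀ n : ℕ,
    ((l.zipIdx n).map f).sum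
      = ((l.zipIdx 0).map f).sum + n * (l.map (fun k => 2 ^ k)).sum := by
  induction l with
  | nil => intro n; simp
  | cons a l ih =>
    intro n
    rw [List.zipIdx_cons, List.zipIdx_cons, List.map_cons, List.map_cons,
      List.sum_cons, List.sum_cons, ih (n + 1), ih 1, List.map_cons, List.sum_cons]
    simp only [f]
    ring

lemma pow_sum : ∀ g, ((expList g).map (fun k => 2 ^ k)).sum = g := by
  intro g
  induction g using Nat.strong_induction_on with
  | _ g ih =>
    rcases Nat.eq_zero_or_pos g with hg | hg
    · subst hg
      simp [expList_zero]
    · set t := Nat.log 2 g with htdef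
      have h1 : 2 ^ t ≤ g := Nat.pow_log_le_self 2 (by omega)
      have h2 : g < 2 ^ (t + 1) := Nat.lt_pow_succ_log_self (by norm_num) g
      set r := g - 2 ^ t with hrdef
      have hr : r < 2 ^ t := by rw [pow_succ] at h2; omega
      have hg' : g = 2 ^ t + r := by omega
      rw [hg', expList_decomp hr, List.map_cons, List.sum_cons,
        ih r (by omega)]

lemma eHL_eq_F : ∀ g, eHL g = F g := by
  intro g
  induction g using Nat.strong_induction_on with
  | _ g ih =>
    rcases Nat.eq_zero_or_pos g with hg | hg
    · subst hg
      simp [eHL, expList_zero]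
    · set t := Nat.log 2 g with htdef
      have h1 : 2 ^ t ≤ g := Nat.pow_log_le_self 2 (by omega)
      have h2 : g < 2 ^ (t + 1) := Nat.lt_pow_succ_log_self (by norm_num) g
      set r := g - 2 ^ t with hrdef
      have hr : r < 2 ^ t := by rw [pow_succ] at h2; omega
      have hg' : g = 2 ^ t + r := by omega
      have hrec : eHL g = t * 2 ^ (t - 1) + (eHL r + r) := by
        rw [hg']
        unfold eHL
        rw [expList_decomp hr]
        have henum : ∀ l : List ℕ, l.zipIdx = l.zipIdx 0 := fun l => rfl
        rw [henum, List.zipIdx_cons]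
        rw [List.map_cons, List.sum_cons]
        have : (fun p : ℕ × ℕ => p.1 * 2 ^ (p.1 - 1) + p.2 * 2 ^ p.1) = f := rfl
        rw [this]
        rw [enumFrom_sum (expList r) 1, pow_sum r, ← henum]
        simp [f]
      rw [hrec, ih r (by omega), hg', F_pow_add t r (by omega)]
      ring

lemma eHL_step {x y : ℕ} (hx : 1 ≤ x) (hy : 1 ≤ y) :
    eHL x + eHL y ≤ eHL (x + y - 1) := by
  rw [eHL_eq_F, eHL_eq_F, eHL_eq_F]
  exact F_step hx hy

end EHLaux

theorem eHL_sum_le (g : ℕ) (hg : 0 < g) (m : Fin g → ℕ) (hm : ∀ i, 1 ≤ m i) :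
    ∑ i, eHL (m i) ≤ eHL ((∑ i, m i) - g + 1) := by
  induction g with
  | zero => omega
  | succ n ih =>
    rcases Nat.eq_zero_or_pos n with hn | hn
    · subst hn
      rw [Fin.sum_univ_one, Fin.sum_univ_one]
      have : m 0 - 1 + 1 = m 0 := by have := hm 0; omega
      rw [this]
    · rw [Fin.sum_univ_castSucc, Fin.sum_univ_castSucc (f := m)]
      set m' : Fin n → ℕ := fun i => m i.castSucc with hm'
      have hm'1 : ∀ i, 1 ≤ m' i := fun i => hm _
      have hIH := ih hn m' hm'1
      set S := ∑ i, m' i with hS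
      have hSn : n ≤ S := by
        calc n = (Finset.univ : Finset (Fin n)).card • 1 := by simp
          _ ≤ S := Finset.card_nsmul_le_sum _ _ _ (fun i _ => hm'1 i)
      have hlast := hm (Fin.last n)
      have h1 : ∑ i : Fin n, eHL (m i.castSucc) + eHL (m (Fin.last n))
          ≤ eHL (S - n + 1) + eHL (m (Fin.last n)) := by
        exact Nat.add_le_add_right hIH _
      refine h1.trans ?_
      have h2 := EHLaux.eHL_step (x := S - n + 1) (y := m (Fin.last n)) (by omega) hlast
      have h3 : (S - n + 1) + m (Fin.last n) - 1 = S + m (Fin.last n) - (n + 1) + 1 := by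
        omega
      rw [h3] at h2
      exact h2
end
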